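/- Let A be a set of nonnegative integers with 0 ∈ A and |A| ≥ 2, and let α = (α_1,...,α_s), β = (β_1,...,β_t) be nondecreasing vectors of positive integers. If R_{A,α}(n) = R_{A,β}(n) for every nonnegative integer n, then s = t and α_i = β_i for all i. -/

import Mathlib

/-- Representation function for a set `A ⊆ ℕ` and coefficient vector `a`:
the number of tuples `(v i)` of elements of `A` with `∑ a i * v i = n`. -/
noncomputable def RSet (A : Set ℕ) {ι : Type} [Fintype ι] (a : ι → ℕ) (n : ℕ) : ℕ :=
  Nat.card {v : ι → ℕ // (∀ i, v i ∈ A) ∧ ∑ i, a i * v i = n}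

open PowerSeries Finset

open Classical in
noncomputable def Fk (A : Set ℕ) (k : ℕ) : PowerSeries ℤ :=
  PowerSeries.mk fun n => if k ∣ n ∧ n / k ∈ A then 1 else 0

lemma Fk_coeff_zero {A : Set ℕ} (h0A : 0 ∈ A) (k : ℕ) : (coeff (R := ℤ) 0) (Fk A k) = 1 := by
  simp [Fk, Nat.zero_div, h0A]

lemma Fk_coeff_small {A : Set ℕ} {m : ℕ} (hmin : ∀ x ∈ A, x ≠ 0 → m ≤ x)
    {k j : ℕ} (hj : 0 < j) (hjk : j < k * m) :
    (coeff (R := ℤ) j) (Fk A k) = 0 := by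
  simp only [Fk, coeff_mk, ite_eq_right_iff]
  rintro ⟨hdvd, hmem⟩
  exfalso
  have hk : 0 < k := by
    rcases Nat.eq_zero_or_pos k with h | h
    · simp [h] at hjk
    · exact h
  have h1 : j / k ≠ 0 := (Nat.div_pos (Nat.le_of_dvd hj hdvd) hk).ne'
  have h2 : j / k < m := Nat.div_lt_of_lt_mul (by omega)
  exact absurd (hmin _ hmem h1) (by omega)

lemma Fk_coeff_min {A : Set ℕ} {m : ℕ} (hmA : m ∈ A) (hm : 0 < m)
    (hmin : ∀ x ∈ A, x ≠ 0 → m ≤ x) {μ k : ℕ} (hμ : 0 < μ) (hk : μ ≤ k) :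
    (coeff (R := ℤ) (μ * m)) (Fk A k) = if k = μ then 1 else 0 := by
  rcases eq_or_lt_of_le hk with rfl | hlt
  · simp [Fk, Nat.mul_div_cancel_left m hμ, hmA, Dvd.intro m rfl]
  · rw [if_neg (by omega)]
    exact Fk_coeff_small hmin (by positivity) (by exact (Nat.mul_lt_mul_right hm).mpr hlt)

lemma Fk_ne_zero {A : Set ℕ} (h0A : 0 ∈ A) (k : ℕ) : Fk A k ≠ 0 := fun h => by
  simpa [h] using Fk_coeff_zero h0A k

lemma Fk_constCoeff_prod {A : Set ℕ} (h0A : 0 ∈ A) (M : Multiset ℕ) :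
    constantCoeff (R := ℤ) (M.map (Fk A)).prod = 1 := by
  rw [map_multiset_prod, Multiset.map_map]
  have h : ∀ k ∈ M, (constantCoeff (R := ℤ) ∘ Fk A) k = 1 := fun k _ => by
    simpa [PowerSeries.coeff_zero_eq_constantCoeff] using Fk_coeff_zero h0A k
  rw [Multiset.map_congr rfl h]
  simp

lemma Fk_coeff_prod_sum {A : Set ℕ} {m : ℕ} (h0A : 0 ∈ A) (hmin : ∀ x ∈ A, x ≠ 0 → m ≤ x)
    (M : Multiset ℕ) {n : ℕ} (hn : 0 < n) (hle : ∀ k ∈ M, n ≤ k * m) :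
    (coeff (R := ℤ) n) (M.map (Fk A)).prod = (M.map fun k => (coeff (R := ℤ) n) (Fk A k)).sum := by
  induction M using Multiset.induction with
  | empty => simp [PowerSeries.coeff_one, hn.ne']
  | cons a M ih =>
    rw [Multiset.map_cons, Multiset.prod_cons, PowerSeries.coeff_mul, Multiset.map_cons,
      Multiset.sum_cons, ← ih (fun k hk => hle k (Multiset.mem_cons_of_mem hk)),
      Finset.Nat.sum_antidiagonal_eq_sum_range_succ_mk, Finset.sum_range_succ]
    have h0 : ∑ i ∈ Finset.range n, (coeff (R := ℤ) i) (Fk A a) * (coeff (R := ℤ) (n - i)) (M.map (Fk A)).prod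
        = (coeff (R := ℤ) n) (M.map (Fk A)).prod := by
      rw [Finset.sum_eq_single_of_mem 0 (Finset.mem_range.mpr hn)]
      · simp [Fk_coeff_zero h0A]
      · intro i hi hi0
        rw [Fk_coeff_small hmin (Nat.pos_of_ne_zero hi0)
          (lt_of_lt_of_le (Finset.mem_range.mp hi) (hle a (Multiset.mem_cons_self a M))),
          zero_mul]
    rw [h0]
    have h1 : (coeff (R := ℤ) (n - n)) (M.map (Fk A)).prod = 1 := by
      simp [PowerSeries.coeff_zero_eq_constantCoeff, Fk_constCoeff_prod h0A]
    rw [h1]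
    ring

lemma sum_indicator_count (M : Multiset ℕ) (μ : ℕ) :
    (M.map fun k => if k = μ then (1:ℤ) else 0).sum = (M.count μ : ℤ) := by
  induction M using Multiset.induction with
  | empty => simp
  | cons a M ih =>
    rcases eq_or_ne a μ with rfl | hh
    · simp [ih, Multiset.count_cons]; omega
    · simp [hh, Ne.symm hh, ih, Multiset.count_cons]

lemma multiset_eq {A : Set ℕ} {m : ℕ} (h0A : 0 ∈ A) (hmA : m ∈ A) (hm : 0 < m)
    (hmin : ∀ x ∈ A, x ≠ 0 → m ≤ x) :
    ∀ (c : ℕ) (M N : Multiset ℕ), Multiset.card M + Multiset.card N ≤ c →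
    (∀ k ∈ M, 0 < k) → (∀ k ∈ N, 0 < k) →
    (M.map (Fk A)).prod = (N.map (Fk A)).prod → M = N := by
  intro c
  induction c with
  | zero =>
    intro M N hc _ _ _
    have h1 : M = 0 := by rw [← Multiset.card_eq_zero]; omega
    have h2 : N = 0 := by rw [← Multiset.card_eq_zero]; omega
    rw [h1, h2]
  | succ c ih =>
    intro M N hc hM hN hprod
    by_cases hMN : M + N = 0
    · have hcard := congrArg Multiset.card hMN
      rw [Multiset.card_add] at hcard
      simp only [Multiset.card_zero] at hcard
      have h1 : M = 0 := by rw [← Multiset.card_eq_zero]; omega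
      have h2 : N = 0 := by rw [← Multiset.card_eq_zero]; omega
      rw [h1, h2]
    · have hex : ∃ x, x ∈ M + N := Multiset.exists_mem_of_ne_zero hMN
      set μ := Nat.find hex with hμdef
      have hμmem : μ ∈ M + N := Nat.find_spec hex
      have hμmin : ∀ b ∈ M + N, μ ≤ b := fun b hb => Nat.find_min' hex hb
      have hμpos : 0 < μ := by
        rcases Multiset.mem_add.mp hμmem with hh | hh
        exacts [hM μ hh, hN μ hh]
      have hnm : 0 < μ * m := by positivity
      have hcoeff := congrArg (coeff (R := ℤ) (μ * m)) hprod
      rw [Fk_coeff_prod_sum h0A hmin M hnm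
          (fun k hk => Nat.mul_le_mul_right m (hμmin k (Multiset.mem_add.mpr (Or.inl hk)))),
        Fk_coeff_prod_sum h0A hmin N hnm
          (fun k hk => Nat.mul_le_mul_right m (hμmin k (Multiset.mem_add.mpr (Or.inr hk)))),
        Multiset.map_congr rfl (fun k hk => Fk_coeff_min hmA hm hmin hμpos
          (hμmin k (Multiset.mem_add.mpr (Or.inl hk)))),
        Multiset.map_congr rfl (fun k hk => Fk_coeff_min hmA hm hmin hμpos
          (hμmin k (Multiset.mem_add.mpr (Or.inr hk)))),
        sum_indicator_count, sum_indicator_count] at hcoeff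
      have hcount : M.count μ = N.count μ := by exact_mod_cast hcoeff
      have hμM : μ ∈ M ∧ μ ∈ N := by
        rcases Multiset.mem_add.mp hμmem with hh | hh
        · exact ⟨hh, Multiset.count_pos.mp (hcount ▸ Multiset.count_pos.mpr hh)⟩
        · exact ⟨Multiset.count_pos.mp (hcount.symm ▸ Multiset.count_pos.mpr hh), hh⟩
      have hMe : M = μ ::ₘ M.erase μ := (Multiset.cons_erase hμM.1).symm
      have hNe : N = μ ::ₘ N.erase μ := (Multiset.cons_erase hμM.2).symm
      rw [hMe, hNe, Multiset.map_cons, Multiset.map_cons, Multiset.prod_cons,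
        Multiset.prod_cons] at hprod
      have hprod' := mul_left_cancel₀ (Fk_ne_zero h0A μ) hprod
      have hcard : Multiset.card (M.erase μ) + Multiset.card (N.erase μ) ≤ c := by
        rw [Multiset.card_erase_of_mem hμM.1, Multiset.card_erase_of_mem hμM.2]
        have c1 : 0 < Multiset.card M := Multiset.card_pos.mpr (fun h => absurd hμM.1 (by simp [h]))
        have c2 : 0 < Multiset.card N := Multiset.card_pos.mpr (fun h => absurd hμM.2 (by simp [h]))
        rw [Nat.pred_eq_sub_one, Nat.pred_eq_sub_one]
        omega
      have := ih (M.erase μ) (N.erase μ) hcard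
        (fun k hk => hM k (Multiset.mem_of_mem_erase hk))
        (fun k hk => hN k (Multiset.mem_of_mem_erase hk)) hprod'
      rw [hMe, hNe, this]

lemma coeff_prod_eq_RSet (A : Set ℕ) {s : ℕ} (α : Fin s → ℕ) (hα : ∀ i, 0 < α i) (n : ℕ) :
    (coeff (R := ℤ) n) (∏ i, Fk A (α i)) = (RSet A α n : ℤ) := by
  classical
  rw [PowerSeries.coeff_prod]
  have hcoe : ∀ (l : Fin s →₀ ℕ), (∏ i, (coeff (R := ℤ) (l i)) (Fk A (α i))) =
      if (∀ i, α i ∣ l i ∧ l i / α i ∈ A) then 1 else 0 := by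
    intro l
    simp only [Fk, coeff_mk]
    rw [Fintype.prod_boole]
    by_cases hl : ∀ i, α i ∣ l i ∧ l i / α i ∈ A <;> simp [hl]
  rw [Finset.sum_congr rfl (fun l _ => hcoe l), Finset.sum_boole]
  congr 1
  let P : (Fin s →₀ ℕ) → Prop := fun l => ∀ i, α i ∣ l i ∧ l i / α i ∈ A
  have e : {v : Fin s → ℕ // (∀ i, v i ∈ A) ∧ ∑ i, α i * v i = n} ≃
      {l // l ∈ (Finset.finsuppAntidiag Finset.univ n).filter P} :=
    { toFun := fun v => ⟨Finsupp.equivFunOnFinite.symm (fun i => α i * v.1 i), by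
        refine Finset.mem_filter.mpr ⟨Finset.mem_finsuppAntidiag.mpr ⟨?_, by simp⟩, ?_⟩
        · simpa using v.2.2
        · intro i
          refine ⟨by simpa using dvd_mul_right (α i) (v.1 i), ?_⟩
          simpa [Nat.mul_div_cancel_left _ (hα i)] using v.2.1 i⟩
      invFun := fun l => ⟨fun i => l.1 i / α i, by
        obtain ⟨h1, h2⟩ := Finset.mem_filter.mp l.2
        refine ⟨fun i => (h2 i).2, ?_⟩
        have hsum := (Finset.mem_finsuppAntidiag.mp h1).1
        calc ∑ i, α i * (l.1 i / α i) = ∑ i, l.1 i := by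
              refine Finset.sum_congr rfl fun i _ => Nat.mul_div_cancel' (h2 i).1
          _ = n := hsum⟩
      left_inv := fun v => by
        ext i
        simp [Nat.mul_div_cancel_left _ (hα i)]
      right_inv := fun l => by
        obtain ⟨h1, h2⟩ := Finset.mem_filter.mp l.2
        apply Subtype.ext
        apply Finsupp.ext
        intro i
        simpa using Nat.mul_div_cancel' (h2 i).1 }
  rw [RSet, Nat.card_congr e, Nat.card_eq_finsetCard]

theorem stmt_5 {s t : ℕ} (A : Set ℕ) (h0A : 0 ∈ A) (hAnt : A.Nontrivial)
    (α : Fin s → ℕ) (β : Fin t → ℕ) (hα : ∀ i, 0 < α i) (hβ : ∀ i, 0 < β i)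
    (hαm : Monotone α) (hβm : Monotone β)
    (h : ∀ n : ℕ, RSet A α n = RSet A β n) :
    s = t ∧ ∀ (i : ℕ) (hi : i < s) (hj : i < t), α ⟨i, hi⟩ = β ⟨i, hj⟩ := by
  classical
  obtain ⟨x, hxA, hx0⟩ := hAnt.exists_ne 0
  have hex : ∃ n, n ∈ A ∧ n ≠ 0 := ⟨x, hxA, hx0⟩
  set m := Nat.find hex with hmdef
  have hmA : m ∈ A := (Nat.find_spec hex).1
  have hm : 0 < m := Nat.pos_of_ne_zero (Nat.find_spec hex).2
  have hmin : ∀ y ∈ A, y ≠ 0 → m ≤ y := fun y hy h0 => Nat.find_min' hex ⟨hy, h0⟩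
  have hprod : (∏ i, Fk A (α i)) = ∏ i, Fk A (β i) := by
    apply PowerSeries.ext
    intro n
    rw [coeff_prod_eq_RSet A α hα n, coeff_prod_eq_RSet A β hβ n, h n]
  have hprodl : (((List.ofFn α : Multiset ℕ)).map (Fk A)).prod
      = (((List.ofFn β : Multiset ℕ)).map (Fk A)).prod := by
    rw [← Fin.univ_val_map α, ← Fin.univ_val_map β, Multiset.map_map, Multiset.map_map,
      ← Finset.prod_eq_multiset_prod, ← Finset.prod_eq_multiset_prod]
    exact hprod
  have hMN : (List.ofFn α : Multiset ℕ) = (List.ofFn β : Multiset ℕ) := by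
    refine multiset_eq h0A hmA hm hmin
      (Multiset.card (List.ofFn α : Multiset ℕ) + Multiset.card (List.ofFn β : Multiset ℕ))
      _ _ le_rfl ?_ ?_ hprodl
    · intro k hk
      obtain ⟨i, rfl⟩ := List.mem_ofFn.mp hk
      exact hα i
    · intro k hk
      obtain ⟨i, rfl⟩ := List.mem_ofFn.mp hk
      exact hβ i
  have hperm : List.Perm (List.ofFn α) (List.ofFn β) := Multiset.coe_eq_coe.mp hMN
  have hlist : List.ofFn α = List.ofFn β :=
    hperm.eq_of_sortedLE hαm.sortedLE_ofFn hβm.sortedLE_ofFn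
  have hst : s = t := by
    have := congrArg List.length hlist
    simpa using this
  refine ⟨hst, fun i hi hj => ?_⟩
  have h1 : (List.ofFn α)[i]'(by simpa using hi) = α ⟨i, hi⟩ := by
    simp
  have h2 : (List.ofFn β)[i]'(by simpa using hj) = β ⟨i, hj⟩ := by
    simp
  rw [← h1, ← h2]
  congr 1
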